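/- For any linear functional ω(A) = Tr(A·R) with R ∈ 𝔄, and the form ⟨A,B⟩ := ω(Θ(A)∘B), one has ⟨Θ(A), Θ(B)⟩ = ⟨B, A⟩ for all A, B ∈ 𝔄₊. Consequently, ω is reflection positive on 𝔄₊ (i.e. 0 ≤ ω(Θ(A)∘A) for all A ∈ 𝔄₊) if and only if ω is reflection positive on 𝔄₋ (i.e. 0 ≤ ω(Θ(B)∘B) for all B ∈ 𝔄₋). -/

import Mathlib

open ComplexOrder

noncomputable section

/-- The setting of the paper: a finite set `Λ` with a fixed-point free involution `ϑ`
exchanging `Λp` and its complement, the Clifford algebra (algebra of Majoranas) `carrier`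
with self-adjoint generators `c i`, the global gauge automorphism `gauge`, the antilinear
reflection `*`-automorphism `Θ`, a square root `ζ` of `-1`, the twisted product `twist`,
a choice `P` of orderings of the subsets of `Λp` (giving the bases
`{C J : J ∈ P}` of `𝔄₊` and `{Θ(C J) ∘ C J' : J, J' ∈ P}` of `𝔄`),
and the tracial state `Tr` picking out the coefficient of `1` in the basis expansion. -/
structure MajoranaSetting where
  Λ : Type
  [fintypeΛ : Fintype Λ]
  [deceqΛ : DecidableEq Λ]
  ϑ : Λ → Λ
  ϑ_invol : Function.Involutive ϑ
  ϑ_fixfree : ∀ i, ϑ i ≠ i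
  Λp : Finset Λ
  ϑ_exch : ∀ i, i ∈ Λp ↔ ϑ i ∉ Λp
  carrier : Type
  [nring : NormedRing carrier]
  [nalg : NormedAlgebra ℂ carrier]
  [cmpl : CompleteSpace carrier]
  [starring : StarRing carrier]
  [starmod : StarModule ℂ carrier]
  c : Λ → carrier
  c_star : ∀ i, star (c i) = c i
  clifford : ∀ i j, c i * c j + c j * c i = if i = j then (2 : carrier) else 0
  gauge : carrier ≃ₐ[ℂ] carrier
  gauge_c : ∀ i, gauge (c i) = - c i
  Θ : carrier → carrier
  Θ_add : ∀ x y, Θ (x + y) = Θ x + Θ y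
  Θ_smul : ∀ (z : ℂ) (x), Θ (z • x) = (starRingEnd ℂ z) • Θ x
  Θ_mul : ∀ x y, Θ (x * y) = Θ x * Θ y
  Θ_star : ∀ x, Θ (star x) = star (Θ x)
  Θ_invol : ∀ x, Θ (Θ x) = x
  Θ_c : ∀ i, Θ (c i) = c (ϑ i)
  ζ : ℂ
  ζ_sq : ζ ^ 2 = -1
  twist : carrier → carrier → carrier
  twist_add_left : ∀ x x' y, twist (x + x') y = twist x y + twist x' y
  twist_add_right : ∀ x y y', twist x (y + y') = twist x y + twist x y'
  twist_smul_left : ∀ (z : ℂ) (x y), twist (z • x) y = z • twist x y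
  twist_smul_right : ∀ (z : ℂ) (x y), twist x (z • y) = z • twist x y
  twist_spec : ∀ (Am Ap Bm Bp : carrier) (a b a' b' : ℕ),
    a ≤ 1 → b ≤ 1 → a' ≤ 1 → b' ≤ 1 →
    Am ∈ Algebra.adjoin ℂ (c '' {i | i ∉ Λp}) →
    Ap ∈ Algebra.adjoin ℂ (c '' {i | i ∈ Λp}) →
    Bm ∈ Algebra.adjoin ℂ (c '' {i | i ∉ Λp}) →
    Bp ∈ Algebra.adjoin ℂ (c '' {i | i ∈ Λp}) →
    gauge Am = ((-1 : ℂ) ^ a) • Am →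
    gauge Ap = ((-1 : ℂ) ^ b) • Ap →
    gauge Bm = ((-1 : ℂ) ^ a') • Bm →
    gauge Bp = ((-1 : ℂ) ^ b') • Bp →
    twist (Am * Ap) (Bm * Bp)
      = ζ ^ ((a * b' : ℤ) - (b * a' : ℤ)) • (Am * Ap * (Bm * Bp))
  P : Finset (List Λ)
  P_nodup : ∀ J ∈ P, J.Nodup
  P_sub : ∀ J ∈ P, ∀ i ∈ J, i ∈ Λp
  P_unique : ∀ s : Finset Λ, s ⊆ Λp → ∃! J, J ∈ P ∧ J.toFinset = s
  Tr : carrier →ₗ[ℂ] ℂ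
  Tr_basis : ∀ J ∈ P, ∀ J' ∈ P,
    Tr (twist (Θ ((J.map c).prod)) ((J'.map c).prod))
      = if J = [] ∧ J' = [] then 1 else 0
  basis_indep : LinearIndependent ℂ
    (fun p : {J // J ∈ P} × {J // J ∈ P} =>
      twist (Θ ((p.1.1.map c).prod)) ((p.2.1.map c).prod))
  basis_span : ∀ x : carrier, x ∈ Submodule.span ℂ
    (Set.range fun p : {J // J ∈ P} × {J // J ∈ P} =>
      twist (Θ ((p.1.1.map c).prod)) ((p.2.1.map c).prod))
  plus_span : ∀ x ∈ Algebra.adjoin ℂ (c '' {i | i ∈ Λp}),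
    x ∈ Submodule.span ℂ (Set.range fun J : {J // J ∈ P} => ((J.1.map c).prod))

attribute [instance] MajoranaSetting.fintypeΛ MajoranaSetting.deceqΛ
  MajoranaSetting.nring MajoranaSetting.nalg MajoranaSetting.cmpl
  MajoranaSetting.starring MajoranaSetting.starmod

namespace MajoranaSetting

variable (S : MajoranaSetting)

/-- The subalgebra `𝔄₊` generated by the Majoranas on the `+` side. -/
def Aplus : Subalgebra ℂ S.carrier := Algebra.adjoin ℂ (S.c '' {i | i ∈ S.Λp})

/-- The subalgebra `𝔄₋` generated by the Majoranas on the `-` side. -/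
def Aminus : Subalgebra ℂ S.carrier := Algebra.adjoin ℂ (S.c '' {i | i ∉ S.Λp})

/-- The monomial `C_𝔍 = c_{i₁} ⋯ c_{i_k}`. -/
def C (J : List S.Λ) : S.carrier := (J.map S.c).prod

/-- `q_𝔍 = (-1)^{k(k-1)/2}`. -/
def q (J : List S.Λ) : ℂ := (-1 : ℂ) ^ (J.length * (J.length - 1) / 2)

/-- `s_𝔍 = ζ^{k(k-1)/2}`. -/
def sgn (J : List S.Λ) : ℂ := S.ζ ^ (J.length * (J.length - 1) / 2)

/-- The exponential `e^x` in the (finite-dimensional) algebra `𝔄`. -/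
def expm (x : S.carrier) : S.carrier := NormedSpace.exp x

/-- The Hamiltonian `H = -∑_{𝔍,𝔍' ∈ 𝒫₊} J_{𝔍𝔍'} Θ(C_𝔍) ∘ C_𝔍'`
determined by coupling constants `Jc`. -/
def Ham (Jc : List S.Λ → List S.Λ → ℂ) : S.carrier :=
  - ∑ J ∈ S.P, ∑ J' ∈ S.P, Jc J J' • S.twist (S.Θ (S.C J)) (S.C J')

/-- The index type of the basis `{C J : J ∈ 𝒫₊}`. -/
abbrev PIdx := {J : List S.Λ // J ∈ S.P}

/-- The index type `𝒫₊ - {∅}` of couplings across the reflection plane. -/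
abbrev PIdx0 := {p : S.PIdx // p.1 ≠ []}

/-- The full matrix of coupling constants. -/
def Jmat (Jc : List S.Λ → List S.Λ → ℂ) : Matrix S.PIdx S.PIdx ℂ :=
  Matrix.of fun p q => Jc p.1 q.1

/-- The matrix `J⁰` of coupling constants across the reflection plane. -/
def Jmat0 (Jc : List S.Λ → List S.Λ → ℂ) : Matrix S.PIdx0 S.PIdx0 ℂ :=
  Matrix.of fun p q => Jc p.1.1 q.1.1

end MajoranaSetting

namespace MajoranaSetting

variable (S : MajoranaSetting)

lemma Θ_zero' : S.Θ 0 = 0 := by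
  have h : S.Θ ((0 : ℂ) • (0 : S.carrier)) = _ := S.Θ_smul 0 0
  simpa using h

lemma Θ_one' : S.Θ 1 = 1 := by
  have h := S.Θ_mul (S.Θ 1) 1
  rw [mul_one, S.Θ_invol, one_mul] at h
  exact h.symm

lemma twist_zero_left' (y : S.carrier) : S.twist 0 y = 0 := by
  have h := S.twist_smul_left 0 0 y
  simpa using h

lemma twist_zero_right' (x : S.carrier) : S.twist x 0 = 0 := by
  have h := S.twist_smul_right 0 x 0
  simpa using h

lemma prod_mem_adjoin' (s : Set S.Λ) : ∀ (J : List S.Λ), (∀ i ∈ J, i ∈ s) →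
    (J.map S.c).prod ∈ Algebra.adjoin ℂ (S.c '' s) := by
  intro J
  induction J with
  | nil => intro _; simpa using one_mem _
  | cons i J ih =>
      intro h
      rw [List.map_cons, List.prod_cons]
      exact mul_mem (Algebra.subset_adjoin ⟨i, h i (by simp), rfl⟩)
        (ih fun j hj => h j (by simp [hj]))

lemma gauge_prod' : ∀ (J : List S.Λ),
    S.gauge ((J.map S.c).prod) = ((-1 : ℂ) ^ J.length) • (J.map S.c).prod := by
  intro J
  induction J with
  | nil => simp
  | cons i J ih =>
      rw [List.map_cons, List.prod_cons, map_mul, S.gauge_c, ih, List.length_cons,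
        mul_smul_comm, neg_mul, pow_succ, mul_comm ((-1 : ℂ) ^ J.length) (-1), mul_smul,
        neg_one_smul, smul_neg]

lemma Θ_prod' : ∀ (J : List S.Λ),
    S.Θ ((J.map S.c).prod) = ((J.map S.ϑ).map S.c).prod := by
  intro J
  induction J with
  | nil => simpa using S.Θ_one'
  | cons i J ih => rw [List.map_cons, List.prod_cons, S.Θ_mul, S.Θ_c, ih]; simp

lemma comm_c' (j : S.Λ) (hj : j ∈ S.Λp) :
    ∀ x ∈ Algebra.adjoin ℂ (S.c '' {i | i ∉ S.Λp}), S.c j * x = S.gauge x * S.c j := by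
  intro x hx
  induction hx using Algebra.adjoin_induction with
  | mem y hy =>
      obtain ⟨i, hi, rfl⟩ := hy
      have hij : ¬ (j = i) := fun h => hi (h ▸ hj)
      have hcl := S.clifford j i
      rw [if_neg hij] at hcl
      rw [S.gauge_c, neg_mul]
      exact eq_neg_of_add_eq_zero_left hcl
  | algebraMap r =>
      rw [AlgEquiv.commutes]
      exact (Algebra.commutes r (S.c j)).symm
  | add x y hx hy ihx ihy => rw [mul_add, ihx, ihy, map_add, add_mul]
  | mul x y hx hy ihx ihy =>
      rw [← mul_assoc, ihx, mul_assoc, ihy, ← mul_assoc, map_mul]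

lemma prod_comm_minus' : ∀ (J : List S.Λ), (∀ i ∈ J, i ∈ S.Λp) →
    ∀ (M : S.carrier) (ε : ℂ), M ∈ Algebra.adjoin ℂ (S.c '' {i | i ∉ S.Λp}) →
    S.gauge M = ε • M →
    (J.map S.c).prod * M = ε ^ J.length • (M * (J.map S.c).prod) := by
  intro J
  induction J with
  | nil => intro _ M ε _ _; simp
  | cons i J ih =>
      intro h M ε hM hg
      have hi : i ∈ S.Λp := h i (by simp)
      rw [List.map_cons, List.prod_cons]
      calc S.c i * (J.map S.c).prod * M
          = S.c i * ((J.map S.c).prod * M) := mul_assoc _ _ _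
        _ = S.c i * (ε ^ J.length • (M * (J.map S.c).prod)) := by
            rw [ih (fun j hj => h j (by simp [hj])) M ε hM hg]
        _ = ε ^ J.length • (S.c i * M * (J.map S.c).prod) := by
            rw [mul_smul_comm, mul_assoc]
        _ = ε ^ J.length • ((ε • M) * S.c i * (J.map S.c).prod) := by
            rw [S.comm_c' i hi M hM, hg]
        _ = ε ^ (i :: J).length • (M * (S.c i * (J.map S.c).prod)) := by
            rw [smul_mul_assoc, smul_mul_assoc, smul_smul, List.length_cons, ← pow_succ,
              mul_assoc]

lemma keyMon' (J J' : List S.Λ) (hJ : ∀ i ∈ J, i ∈ S.Λp) (hJ' : ∀ i ∈ J', i ∈ S.Λp) :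
    S.twist ((J.map S.c).prod) (S.Θ ((J'.map S.c).prod))
      = S.twist (S.Θ ((J'.map S.c).prod)) ((J.map S.c).prod) := by
  have hζ : S.ζ ≠ 0 := by
    intro h; have h2 := S.ζ_sq; rw [h] at h2; norm_num at h2
  have hMC : S.Θ ((J'.map S.c).prod) = ((J'.map S.ϑ).map S.c).prod := S.Θ_prod' J'
  set A : S.carrier := (J.map S.c).prod with hAdef
  set M : S.carrier := S.Θ ((J'.map S.c).prod) with hMdef
  have hApl : A ∈ Algebra.adjoin ℂ (S.c '' {i | i ∈ S.Λp}) :=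
    S.prod_mem_adjoin' _ J hJ
  have hMmi : M ∈ Algebra.adjoin ℂ (S.c '' {i | i ∉ S.Λp}) := by
    rw [hMC]
    refine S.prod_mem_adjoin' _ _ ?_
    intro i hi
    obtain ⟨j, hj, rfl⟩ := List.mem_map.mp hi
    exact (S.ϑ_exch j).mp (hJ' j hj)
  have h1p : (1 : S.carrier) ∈ Algebra.adjoin ℂ (S.c '' {i | i ∈ S.Λp}) := one_mem _
  have h1m : (1 : S.carrier) ∈ Algebra.adjoin ℂ (S.c '' {i | i ∉ S.Λp}) := one_mem _
  have ha1 : J.length % 2 ≤ 1 := Nat.lt_succ_iff.mp (Nat.mod_lt _ two_pos)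
  have hb1 : J'.length % 2 ≤ 1 := Nat.lt_succ_iff.mp (Nat.mod_lt _ two_pos)
  have hgA : S.gauge A = ((-1 : ℂ) ^ (J.length % 2)) • A := by
    rw [hAdef, S.gauge_prod', neg_one_pow_eq_pow_mod_two]
  have hgM' : S.gauge M = ((-1 : ℂ) ^ J'.length) • M := by
    rw [hMC, S.gauge_prod', List.length_map]
  have hgM : S.gauge M = ((-1 : ℂ) ^ (J'.length % 2)) • M := by
    rw [hgM', neg_one_pow_eq_pow_mod_two]
  have hg1 : S.gauge 1 = ((-1 : ℂ) ^ 0) • (1 : S.carrier) := by simp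
  have hL := S.twist_spec 1 A M 1 0 (J.length % 2) (J'.length % 2) 0 (by norm_num) ha1 hb1
    (by norm_num) h1m hApl hMmi h1p hg1 hgA hgM hg1
  have hR := S.twist_spec M 1 1 A (J'.length % 2) 0 0 (J.length % 2) hb1 (by norm_num)
    (by norm_num) ha1 hMmi h1p h1m hApl hgM hg1 hg1 hgA
  rw [one_mul, mul_one] at hL hR
  have hcomm : A * M = ((-1 : ℂ) ^ (J'.length * J.length)) • (M * A) := by
    have h := S.prod_comm_minus' J hJ M ((-1 : ℂ) ^ J'.length) hMmi hgM'
    rw [hAdef, h, ← pow_mul]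
  have hpow : ((-1 : ℂ)) ^ (J'.length * J.length)
      = (-1 : ℂ) ^ (J'.length % 2 * (J.length % 2)) := by
    rw [neg_one_pow_eq_pow_mod_two, Nat.mul_mod, ← neg_one_pow_eq_pow_mod_two]
  rw [hL, hR, hcomm, smul_smul]
  congr 1
  rw [hpow, ← S.ζ_sq, ← pow_mul,
    ← zpow_natCast S.ζ (2 * (J'.length % 2 * (J.length % 2))), ← zpow_add₀ hζ]
  congr 1
  push_cast
  ring


lemma Θ_mem_minus' (x : S.carrier) (hx : x ∈ S.Aplus) : S.Θ x ∈ S.Aminus := by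
  have hx' : x ∈ Algebra.adjoin ℂ (S.c '' {i | i ∈ S.Λp}) := hx
  clear hx
  have : S.Θ x ∈ Algebra.adjoin ℂ (S.c '' {i | i ∉ S.Λp}) := by
    induction hx' using Algebra.adjoin_induction with
    | mem y hy =>
        obtain ⟨i, hi, rfl⟩ := hy
        rw [S.Θ_c]
        exact Algebra.subset_adjoin ⟨S.ϑ i, (S.ϑ_exch i).mp hi, rfl⟩
    | algebraMap r =>
        rw [Algebra.algebraMap_eq_smul_one, S.Θ_smul, S.Θ_one']
        exact Subalgebra.smul_mem _ (one_mem _) _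
    | add x y hx hy ihx ihy => rw [S.Θ_add]; exact add_mem ihx ihy
    | mul x y hx hy ihx ihy => rw [S.Θ_mul]; exact mul_mem ihx ihy
  exact this

lemma Θ_mem_plus' (x : S.carrier) (hx : x ∈ S.Aminus) : S.Θ x ∈ S.Aplus := by
  have hx' : x ∈ Algebra.adjoin ℂ (S.c '' {i | i ∉ S.Λp}) := hx
  clear hx
  have : S.Θ x ∈ Algebra.adjoin ℂ (S.c '' {i | i ∈ S.Λp}) := by
    induction hx' using Algebra.adjoin_induction with
    | mem y hy =>
        obtain ⟨i, hi, rfl⟩ := hy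
        rw [S.Θ_c]
        have : S.ϑ i ∈ S.Λp := (S.ϑ_exch (S.ϑ i)).mpr (by rw [S.ϑ_invol i]; exact hi)
        exact Algebra.subset_adjoin ⟨S.ϑ i, this, rfl⟩
    | algebraMap r =>
        rw [Algebra.algebraMap_eq_smul_one, S.Θ_smul, S.Θ_one']
        exact Subalgebra.smul_mem _ (one_mem _) _
    | add x y hx hy ihx ihy => rw [S.Θ_add]; exact add_mem ihx ihy
    | mul x y hx hy ihx ihy => rw [S.Θ_mul]; exact mul_mem ihx ihy
  exact this

lemma twist_theta_comm (A B : S.carrier) (hA : A ∈ S.Aplus) (hB : B ∈ S.Aplus) :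
    S.twist A (S.Θ B) = S.twist (S.Θ B) A := by
  have hA' := S.plus_span A hA
  have hB' := S.plus_span B hB
  clear hA hB
  induction hA' using Submodule.span_induction with
  | mem x hx =>
      obtain ⟨⟨J, hJ⟩, rfl⟩ := hx
      induction hB' using Submodule.span_induction with
      | mem y hy =>
          obtain ⟨⟨J', hJ'⟩, rfl⟩ := hy
          exact S.keyMon' J J' (S.P_sub J hJ) (S.P_sub J' hJ')
      | zero => rw [S.Θ_zero', S.twist_zero_left', S.twist_zero_right']
      | add y z _ _ ihy ihz =>
          rw [S.Θ_add, S.twist_add_left, S.twist_add_right, ihy, ihz]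
      | smul z y _ ihy =>
          rw [S.Θ_smul, S.twist_smul_left, S.twist_smul_right, ihy]
  | zero => rw [S.twist_zero_left', S.twist_zero_right']
  | add x y _ _ ihx ihy => rw [S.twist_add_left, S.twist_add_right, ihx, ihy]
  | smul z x _ ihx => rw [S.twist_smul_left, S.twist_smul_right, ihx]

end MajoranaSetting


/-- `⟨Θ(A), Θ(B)⟩ = ⟨B, A⟩` for `A, B ∈ 𝔄₊`, and consequently
`ω(A) = Tr(A·R)` is reflection positive on `𝔄₊` iff it is reflection positive
on `𝔄₋`. -/
theorem reflection_positivity_plus_iff_minus (S : MajoranaSetting) (R : S.carrier) :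
    (∀ A ∈ S.Aplus, ∀ B ∈ S.Aplus,
      S.Tr (S.twist (S.Θ (S.Θ A)) (S.Θ B) * R) = S.Tr (S.twist (S.Θ B) A * R)) ∧
    ((∀ A ∈ S.Aplus, 0 ≤ S.Tr (S.twist (S.Θ A) A * R)) ↔
      (∀ B ∈ S.Aminus, 0 ≤ S.Tr (S.twist (S.Θ B) B * R))) := by
  refine ⟨?_, ?_, ?_⟩
  · intro A hA B hB
    rw [S.Θ_invol, S.twist_theta_comm A B hA hB]
  · intro hp B hB
    have hA : S.Θ B ∈ S.Aplus := S.Θ_mem_plus' B hB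
    have h := hp (S.Θ B) hA
    have e := S.twist_theta_comm (S.Θ B) (S.Θ B) hA hA
    rw [S.Θ_invol] at e h
    rw [e]
    exact h
  · intro hm A hA
    have hB : S.Θ A ∈ S.Aminus := S.Θ_mem_minus' A hA
    have h := hm (S.Θ A) hB
    rw [S.Θ_invol] at h
    rw [← S.twist_theta_comm A A hA hA]
    exact h
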